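/- Let Δ be a distribution of Σ and let Q ⊆ M(Δ). Suppose Δ belongs to the smallest set of distributions of Σ that contains Q and is closed under substitution (i.e., that contains (Δ' ⊢_i Δ'') whenever it contains Δ' and Δ'' and Δ' ⇀_i Δ''). Then every P ∈ S_Δ with |P| ≥ 2 and P ≤_Δ Q is a reduction of Δ. -/

import Mathlib

/-- A *distribution* of the (finite) alphabet `α`: a family of non-empty,
pairwise incomparable (under set inclusion) sub-alphabets whose union is `α`.
Its size is `comps.ncard`. -/
structure Distr (α : Type) [Fintype α] where
  comps : Set (Set α)
  comps_nonempty : ∀ S ∈ comps, S.Nonempty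
  comps_cover : ∀ a : α, ∃ S ∈ comps, a ∈ S
  comps_incomp : ∀ S ∈ comps, ∀ T ∈ comps, S ≠ T → ¬ S ⊆ T

section Defs

variable {α : Type} [Fintype α]

/-- Natural projection `P_{Σ'}`: erase from a string all symbols not in `S`. -/
noncomputable def projA (S : Set α) (s : List α) : List α :=
  s.filter fun a => @decide (a ∈ S) (Classical.propDecidable _)

/-- `L` is decomposable with respect to `Δ`:
`L = ∥_i P_{Σ_i}(L) = ⋂_i P_{Σ_i}⁻¹(P_{Σ_i}(L))`. -/
def Decomposable (L : Set (List α)) (Δ : Distr α) : Prop :=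
  L = ⋂ S ∈ Δ.comps, projA S ⁻¹' (projA S '' L)

/-- The partial order `≤_Σ` on distributions: every component of `Δ` is
contained in some component of `Δ'`. -/
def DistLE (Δ Δ' : Distr α) : Prop :=
  ∀ S ∈ Δ.comps, ∃ T ∈ Δ'.comps, S ⊆ T

/-- `P` is a *reduction* of `Δ`. -/
def IsReduction (P : Set (Distr α)) (Δ : Distr α) : Prop :=
  2 ≤ P.ncard ∧
  (∀ Δ' ∈ P, Δ'.comps.ncard < Δ.comps.ncard) ∧
  (∀ L : Set (List α), Decomposable L Δ ↔ ∀ Δ' ∈ P, Decomposable L Δ')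

/-- The maximal members (under set inclusion) of a family of sets. -/
def MaximalMem {β : Type} (F : Set (Set β)) : Set (Set β) :=
  {S | S ∈ F ∧ ∀ T ∈ F, S ⊆ T → S = T}

/-- The dependence relation `D_Δ`. -/
def DepRel (Δ : Distr α) : Set (α × α) :=
  {p | ∃ S ∈ Δ.comps, p.1 ∈ S ∧ p.2 ∈ S}

/-- The independence relation `I_Δ = Σ × Σ − D_Δ`. -/
def IndepRel (Δ : Distr α) : Set (α × α) :=
  {p | ¬ ∃ S ∈ Δ.comps, p.1 ∈ S ∧ p.2 ∈ S}

/-- `Σ' ⊑ Δ`: `Σ'` is contained in some component of `Δ`. -/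
def SqSub (S : Set α) (Δ : Distr α) : Prop :=
  ∃ T ∈ Δ.comps, S ⊆ T

/-- `Δ` is the greatest lower bound of the family `D` with respect to `≤_Σ`. -/
def IsGLBFam {l : ℕ} (D : Fin l → Distr α) (Δ : Distr α) : Prop :=
  (∀ i, DistLE Δ (D i)) ∧
  ∀ Δ''' : Distr α, (∀ i, DistLE Δ''' (D i)) → DistLE Δ''' Δ

/-- `Δ'` is *merged* from `Δ`: `Δ' ≠ (Σ)` and `Δ'` is obtained from a
partition of the components of `Δ` having at least one block of size ≥ 2 by
taking the unions over the blocks and keeping only the maximal resulting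
sub-alphabets. -/
def MergedFrom (Δ' Δ : Distr α) : Prop :=
  Δ'.comps ≠ {Set.univ} ∧
  ∃ part : Set (Set (Set α)),
    (∀ B ∈ part, B.Nonempty) ∧
    (∀ B ∈ part, B ⊆ Δ.comps) ∧
    (∀ B ∈ part, ∀ C ∈ part, B ≠ C → Disjoint B C) ∧
    (∀ S ∈ Δ.comps, ∃ B ∈ part, S ∈ B) ∧
    (∃ B ∈ part, ∃ S ∈ B, ∃ T ∈ B, S ≠ T) ∧
    Δ'.comps = MaximalMem {U : Set α | ∃ B ∈ part, U = ⋃₀ B}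

/-- Membership in the search space `S_Δ`: a set of distributions merged from
`Δ` that are pairwise `≤_Σ`-incomparable. -/
def MemS (Δ : Distr α) (P : Set (Distr α)) : Prop :=
  (∀ Δ' ∈ P, MergedFrom Δ' Δ) ∧
  ∀ Δ₁ ∈ P, ∀ Δ₂ ∈ P, Δ₁ ≠ Δ₂ → ¬ DistLE Δ₁ Δ₂

/-- The ordering `≤_Δ` on sets of distributions: every member of `Q` has a
member of `P` below it with respect to `≤_Σ`. -/
def SetLE (P Q : Set (Distr α)) : Prop :=
  ∀ Δ' ∈ Q, ∃ Δ'' ∈ P, DistLE Δ'' Δ'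

/-- `[F]`: the `≤_Σ`-minimal members of a set of distributions. -/
def MinimalD (F : Set (Distr α)) : Set (Distr α) :=
  {Δ' | Δ' ∈ F ∧ ∀ Δ'' ∈ F, DistLE Δ'' Δ' → DistLE Δ' Δ''}

/-- `Δ'` is obtained from `Δ` by merging exactly two components `S ≠ T`
(and keeping only the maximal sub-alphabets); the members of `⊥(Δ)`. -/
def MinMergedFrom (Δ' Δ : Distr α) : Prop :=
  ∃ S ∈ Δ.comps, ∃ T ∈ Δ.comps, S ≠ T ∧
    Δ'.comps = MaximalMem ((Δ.comps \ {S, T}) ∪ {S ∪ T})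

/-- The set `A(Δ)` of shared symbols of a distribution. -/
def SharedSyms (Δ : Distr α) : Set α :=
  {a | ∃ S ∈ Δ.comps, ∃ T ∈ Δ.comps, S ≠ T ∧ a ∈ S ∧ a ∈ T}

/-- The substitution of `Δ'` into the component `C` of `Δ''` yields `Δs`:
`Δs` is obtained from the components of `Δ''` other than `C` together with the
intersections `C ∩ S` for components `S` of `Δ'`, keeping only the maximal
non-empty members. -/
def SubstResult (Δ' Δ'' : Distr α) (C : Set α) (Δs : Distr α) : Prop :=
  Δs.comps =
    MaximalMem {T : Set α |
      T.Nonempty ∧ (T ∈ Δ''.comps \ {C} ∨ ∃ S ∈ Δ'.comps, T = C ∩ S)}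

/-- One swap of two adjacent symbols forming a pair in `I`. -/
def SwapStep (I : Set (α × α)) (s t : List α) : Prop :=
  ∃ (u v : List α) (a b : α),
    (a, b) ∈ I ∧ s = u ++ a :: b :: v ∧ t = u ++ b :: a :: v

/-- Trace equivalence with respect to `I`: a finite sequence of swaps of
adjacent independent symbols. -/
def TraceEquiv (I : Set (α × α)) : List α → List α → Prop :=
  Relation.ReflTransGen (SwapStep I)

/-- `L` is trace-closed with respect to `I`. -/
def TraceClosed (I : Set (α × α)) (L : Set (List α)) : Prop :=
  L = {t | ∃ s ∈ L, TraceEquiv I s t}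

/-- The map `N` determined by the enumeration `c` of the components of a
distribution: `N(a) = {i : a ∉ Σ_i}`. -/
def Nmap {n : ℕ} (c : Fin n → Set α) (a : α) : Set (Fin n) :=
  {i | a ∉ c i}

/-- A simple path from `x` to `y` in the graph `(Σ, D)`: a list of pairwise
distinct symbols, starting at `x`, ending at `y`, with consecutive symbols
related by `D`. -/
def IsSimplePath (D : Set (α × α)) (p : List α) (x y : α) : Prop :=
  p.Nodup ∧ p.head? = some x ∧ p.getLast? = some y ∧
    p.Chain' (fun a b => (a, b) ∈ D)

/-- `Cr_D(S, y)` (with `N` given by the enumeration `c`): the set of indices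
`i` such that some simple path `p` from some `x ∈ S` to `y` in `(Σ, D)`
satisfies `i ∈ ⋂_{a ∈ p.dropLast} N(a)`. -/
def CrSet {n : ℕ} (c : Fin n → Set α) (D : Set (α × α)) (S : Set α) (y : α) :
    Set (Fin n) :=
  {i | ∃ x ∈ S, ∃ p : List α,
    IsSimplePath D p x y ∧ ∀ a ∈ p.dropLast, i ∈ Nmap c a}

/-- The smallest set of distributions containing `Q` and closed under
substitution. -/
inductive SubstClosure (Q : Set (Distr α)) : Distr α → Prop
  | base (Δ' : Distr α) (h : Δ' ∈ Q) : SubstClosure Q Δ'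
  | step (Δ' Δ'' Δs : Distr α) (C : Set α)
      (h1 : SubstClosure Q Δ') (h2 : SubstClosure Q Δ'')
      (hC : C ∈ Δ''.comps) (hA : SharedSyms Δ' ⊆ C)
      (hs : SubstResult Δ' Δ'' C Δs) : SubstClosure Q Δs

end Defs

section Count

variable {α : Type} [Fintype α] [DecidableEq α]

/-- `L(Σ_j)` (with `j` 0-indexed, so the paper's exponent `j+1` is `j+2`
here): all strings containing exactly one occurrence of each `σ_i ∈ Σ_j` and
exactly `j+2` occurrences of each `σ_i ∉ Σ_j`. -/
def Lword {m : ℕ} (σ : Fin m → α) (Sj : Set α) (j : ℕ) : Set (List α) :=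
  {s | ∀ i : Fin m,
    (σ i ∈ Sj → s.count (σ i) = 1) ∧ (σ i ∉ Sj → s.count (σ i) = j + 2)}

/-- The candidate counter example `L_cand = ⋃_j L(Σ_j)`, relative to an
enumeration `c` of the components and an enumeration `σ` of the alphabet. -/
def Lcand {n m : ℕ} (c : Fin n → Set α) (σ : Fin m → α) : Set (List α) :=
  ⋃ j : Fin n, Lword σ (c j) (j : ℕ)

end Count


namespace Stmt11Aux

variable {α : Type}

lemma mem_projA {S : Set α} {l : List α} {x : α} :
    x ∈ projA S l ↔ x ∈ l ∧ x ∈ S := by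
  simp [projA, List.mem_filter]

lemma projA_cons_mem {S : Set α} {a : α} (h : a ∈ S) (l : List α) :
    projA S (a :: l) = a :: projA S l := by
  simp [projA, List.filter_cons, h]

lemma projA_cons_not_mem {S : Set α} {a : α} (h : a ∉ S) (l : List α) :
    projA S (a :: l) = projA S l := by
  simp [projA, List.filter_cons, h]

lemma projA_append (S : Set α) (l l' : List α) :
    projA S (l ++ l') = projA S l ++ projA S l' := by
  simp [projA]

lemma projA_congr {S T : Set α} {l : List α} (h : ∀ x ∈ l, x ∈ S ↔ x ∈ T) :
    projA S l = projA T l :=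
  List.filter_congr fun x hx => decide_eq_decide.mpr (h x hx)

lemma projA_projA (S T : Set α) (l : List α) :
    projA S (projA T l) = projA (S ∩ T) l := by
  induction l with
  | nil => rfl
  | cons a l ih =>
    by_cases hT : a ∈ T
    · by_cases hS : a ∈ S
      · rw [projA_cons_mem hT, projA_cons_mem hS,
          projA_cons_mem (Set.mem_inter hS hT), ih]
      · rw [projA_cons_mem hT, projA_cons_not_mem hS,
          projA_cons_not_mem (fun h => hS h.1), ih]
    · rw [projA_cons_not_mem hT, projA_cons_not_mem (fun h => hT h.2), ih]

lemma projA_eq_self {S : Set α} {l : List α} (h : ∀ x ∈ l, x ∈ S) :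
    projA S l = l := by
  induction l with
  | nil => rfl
  | cons a l ih =>
    rw [projA_cons_mem (h a (List.mem_cons_self (a := a) (l := l))),
      ih fun x hx => h x (List.mem_cons_of_mem _ hx)]

lemma projA_eq_nil {S : Set α} {l : List α} (h : ∀ x ∈ l, x ∉ S) :
    projA S l = [] := by
  induction l with
  | nil => rfl
  | cons a l ih =>
    rw [projA_cons_not_mem (h a (List.mem_cons_self (a := a) (l := l))),
      ih fun x hx => h x (List.mem_cons_of_mem _ hx)]

lemma projA_of_subset {S T : Set α} (h : S ⊆ T) (l : List α) :
    projA S (projA T l) = projA S l := by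
  rw [projA_projA, Set.inter_eq_left.mpr h]

/-- split a list at the first element satisfying the filter -/
lemma filter_split (q : α → Bool) (l : List α) (a : α) (l' : List α)
    (h : l.filter q = a :: l') :
    ∃ u v, l = u ++ a :: v ∧ (∀ x ∈ u, q x = false) ∧ v.filter q = l' := by
  induction l with
  | nil => simp at h
  | cons b t ih =>
    rw [List.filter_cons] at h
    by_cases hb : q b
    · simp only [hb, if_true, List.cons.injEq] at h
      exact ⟨[], t, by simp [h.1], by simp, h.2⟩
    · simp only [hb] at h
      simp only [if_neg, Bool.false_eq_true, not_false_iff] at h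
      obtain ⟨u, v, h1, h2, h3⟩ := ih h
      exact ⟨b :: u, v, by simp [h1], by
        intro x hx
        rcases List.mem_cons.mp hx with h | h
        · subst h; exact Bool.eq_false_iff.mpr hb
        · exact h2 x h, h3⟩

/-- Merge a single component word `r` (over `S`) into an already built word
`w'` whose `S`-symbols all lie in `C` and agree with the `C`-symbols of `r`. -/
lemma merge_lemma (C S : Set α) (r : List α) :
    ∀ w' : List α, (∀ x ∈ r, x ∈ S) → (∀ x ∈ w', x ∈ S → x ∈ C) →
    projA S w' = projA C r →
    ∃ w, projA S w = r ∧
      (∀ X : Set α, (∀ x, x ∈ S → x ∉ C → x ∉ X) → projA X w = projA X w') ∧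
      (∀ x ∈ w, x ∈ r ∨ x ∈ w') := by
  induction r with
  | nil =>
    intro w' _ _ hk
    refine ⟨w', ?_, fun X _ => rfl, fun x hx => Or.inr hx⟩
    exact hk
  | cons a r' ih =>
    intro w' hr hw' hk
    have haS : a ∈ S := hr a (List.mem_cons_self (a := a) (l := r'))
    by_cases ha : a ∈ C
    · rw [projA_cons_mem ha] at hk
      obtain ⟨u, v, hw'eq, hu, hv⟩ := filter_split _ w' a _ hk
      have huS : ∀ x ∈ u, x ∉ S := by
        intro x hx hxS
        have := hu x hx
        simp [hxS] at this
      have hvw' : ∀ x ∈ v, x ∈ w' := by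
        intro x hx; rw [hw'eq]
        exact List.mem_append_right _ (List.mem_cons_of_mem _ hx)
      obtain ⟨w, hw1, hw2, hw3⟩ := ih v
        (fun x hx => hr x (List.mem_cons_of_mem _ hx))
        (fun x hx hxS => hw' x (hvw' x hx) hxS) hv
      refine ⟨u ++ a :: w, ?_, ?_, ?_⟩
      · rw [projA_append, projA_eq_nil huS, projA_cons_mem haS, hw1]
        rfl
      · intro X hX
        rw [hw'eq, projA_append, projA_append]
        congr 1
        by_cases haX : a ∈ X
        · rw [projA_cons_mem haX, projA_cons_mem haX, hw2 X hX]
        · rw [projA_cons_not_mem haX, projA_cons_not_mem haX, hw2 X hX]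
      · intro x hx
        rcases List.mem_append.mp hx with h | h
        · exact Or.inr (by rw [hw'eq]; exact List.mem_append_left _ h)
        · rcases List.mem_cons.mp h with h | h
          · exact Or.inl (h ▸ List.mem_cons_self (a := a) (l := r'))
          · rcases hw3 x h with h' | h'
            · exact Or.inl (List.mem_cons_of_mem _ h')
            · exact Or.inr (hvw' x h')
    · rw [projA_cons_not_mem ha] at hk
      obtain ⟨w, hw1, hw2, hw3⟩ := ih w'
        (fun x hx => hr x (List.mem_cons_of_mem _ hx)) hw' hk
      refine ⟨a :: w, ?_, ?_, ?_⟩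
      · rw [projA_cons_mem haS, hw1]
      · intro X hX
        rw [projA_cons_not_mem (hX a haS ha), hw2 X hX]
      · intro x hx
        rcases List.mem_cons.mp hx with h | h
        · exact Or.inl (h ▸ List.mem_cons_self (a := a) (l := r'))
        · rcases hw3 x h with h' | h'
          · exact Or.inl (List.mem_cons_of_mem _ h')
          · exact Or.inr h'

/-- Build a word with prescribed projections on a family of components that
pairwise only share symbols inside `C`. -/
lemma build_lemma (C : Set α) (t : List α) (ht : ∀ a ∈ t, a ∈ C) :
    ∀ pairs : List (Set α × List α),
    (∀ p ∈ pairs, (∀ x ∈ p.2, x ∈ p.1) ∧ projA C p.2 = projA p.1 t) →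
    pairs.Pairwise (fun p q => ∀ x, x ∈ p.1 → x ∈ q.1 → x ∈ C) →
    ∃ w, projA C w = t ∧ (∀ p ∈ pairs, projA p.1 w = p.2) ∧
      ∀ x ∈ w, x ∈ C ∨ ∃ p ∈ pairs, x ∈ p.2 := by
  intro pairs
  induction pairs with
  | nil =>
    intro _ _
    exact ⟨t, projA_eq_self ht, by simp, fun x hx => Or.inl (ht x hx)⟩
  | cons p rest ih =>
    intro hp hpw
    have hrel : ∀ q ∈ rest, ∀ x, x ∈ p.1 → x ∈ q.1 → x ∈ C :=
      (List.pairwise_cons.mp hpw).1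
    obtain ⟨w', hw'1, hw'2, hw'3⟩ := ih
      (fun q hq => hp q (List.mem_cons_of_mem _ hq))
      (List.pairwise_cons.mp hpw).2
    have hS : ∀ x ∈ w', x ∈ p.1 → x ∈ C := by
      intro x hx hxS
      rcases hw'3 x hx with h | ⟨q, hq, hxq⟩
      · exact h
      · exact hrel q hq x hxS ((hp q (List.mem_cons_of_mem _ hq)).1 x hxq)
    have hkey : projA p.1 w' = projA C p.2 := by
      rw [(hp p (List.mem_cons_self (a := p) (l := rest))).2]
      have h1 : projA p.1 w' = projA (p.1 ∩ C) w' :=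
        projA_congr fun x hx => ⟨fun h => ⟨h, hS x hx h⟩, fun h => h.1⟩
      rw [h1, ← hw'1, projA_projA]
    obtain ⟨w, hw1, hw2, hw3⟩ :=
      merge_lemma C p.1 p.2 w' (hp p (List.mem_cons_self (a := p) (l := rest))).1 hS hkey
    refine ⟨w, ?_, ?_, ?_⟩
    · rw [hw2 C (fun x _ hxC => hxC), hw'1]
    · intro q hq
      rcases List.mem_cons.mp hq with h | h
      · subst h; exact hw1
      · rw [hw2 q.1 (fun x hxS hxC hxq => hxC (hrel q h x hxS hxq))]
        exact hw'2 q h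
    · intro x hx
      rcases hw3 x hx with h | h
      · exact Or.inr ⟨p, List.mem_cons_self (a := p) (l := rest), h⟩
      · rcases hw'3 x h with h' | ⟨q, hq, hxq⟩
        · exact Or.inl h'
        · exact Or.inr ⟨q, List.mem_cons_of_mem _ hq, hxq⟩

variable [Fintype α]

lemma decomposable_iff {L : Set (List α)} {Δ : Distr α} :
    Decomposable L Δ ↔ ∀ s : List α,
      (∀ S ∈ Δ.comps, ∃ l ∈ L, projA S l = projA S s) → s ∈ L := by
  constructor
  · intro h s hs
    rw [h]
    refine Set.mem_iInter₂.mpr fun S hS => ?_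
    obtain ⟨l, hl, he⟩ := hs S hS
    exact ⟨l, hl, he⟩
  · intro h
    apply Set.Subset.antisymm
    · intro s hs
      exact Set.mem_iInter₂.mpr fun S hS => ⟨s, hs, rfl⟩
    · intro s hs
      refine h s fun S hS => ?_
      obtain ⟨l, hl, he⟩ := Set.mem_iInter₂.mp hs S hS
      exact ⟨l, hl, he⟩

lemma decomp_mono {L : Set (List α)} {Δ Δ' : Distr α}
    (h : Decomposable L Δ) (hle : DistLE Δ Δ') : Decomposable L Δ' := by
  rw [decomposable_iff] at h ⊢
  intro s hs
  refine h s fun S hS => ?_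
  obtain ⟨T, hT, hST⟩ := hle S hS
  obtain ⟨l, hl, he⟩ := hs T hT
  refine ⟨l, hl, ?_⟩
  rw [← projA_of_subset hST l, he, projA_of_subset hST]

lemma exists_max_superset {β : Type} (F : Set (Set β)) (hF : F.Finite)
    {S : Set β} (hS : S ∈ F) : ∃ T ∈ MaximalMem F, S ⊆ T := by
  obtain ⟨a, ha, hmax⟩ := Set.Finite.exists_maximalFor id {T ∈ F | S ⊆ T}
    (hF.subset (Set.sep_subset _ _)) ⟨S, hS, subset_rfl⟩
  exact ⟨a, ⟨ha.1, fun U hU haU => haU.antisymm (hmax ⟨hU, ha.2.trans haU⟩ haU)⟩, ha.2⟩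

lemma merged_distLE {Δ' Δ : Distr α} (h : MergedFrom Δ' Δ) : DistLE Δ Δ' := by
  obtain ⟨-, part, hne, hsub, hdisj, hcover, -, hcomps⟩ := h
  intro S hS
  obtain ⟨B, hB, hSB⟩ := hcover S hS
  obtain ⟨T, hT, hBT⟩ := exists_max_superset {U : Set α | ∃ B ∈ part, U = Set.sUnion B}
    (Set.toFinite _) ⟨B, hB, rfl⟩
  exact ⟨T, hcomps ▸ hT, (Set.subset_sUnion_of_mem hSB).trans hBT⟩

lemma merged_ncard_lt {Δ' Δ : Distr α} (h : MergedFrom Δ' Δ) :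
    Δ'.comps.ncard < Δ.comps.ncard := by
  classical
  obtain ⟨-, part, hne, hsub, hdisj, hcover,
    ⟨B0, hB0, S0, hS0, T0, hT0, hST⟩, hcomps⟩ := h
  set g : Set (Set α) → Set α := fun B => if h : B.Nonempty then h.choose else ∅
    with hg
  have hgmem : ∀ B ∈ part, g B ∈ B := by
    intro B hB
    have hBne := hne B hB
    simp only [hg, dif_pos hBne]
    exact hBne.choose_spec
  have hinj : Set.InjOn g part := by
    intro B hB B' hB' hgg
    by_contra hne'
    exact Set.disjoint_left.mp (hdisj B hB B' hB' hne') (hgmem B hB)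
      (hgg ▸ hgmem B' hB')
  have himg : g '' part ⊆ Δ.comps := by
    rintro _ ⟨B, hB, rfl⟩; exact hsub B hB (hgmem B hB)
  obtain ⟨U, hUB0, hUne⟩ : ∃ U ∈ B0, U ≠ g B0 := by
    by_cases h' : g B0 = S0
    · exact ⟨T0, hT0, fun he => hST ((he.trans h').symm)⟩
    · exact ⟨S0, hS0, fun he => h' he.symm⟩
  have hUnotimg : U ∉ g '' part := by
    rintro ⟨B', hB', rfl⟩
    have hBeq : B' = B0 := by
      by_contra hne'
      exact Set.disjoint_left.mp (hdisj B' hB' B0 hB0 hne') (hgmem B' hB') hUB0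
    exact hUne (by rw [hBeq])
  have hss : g '' part ⊂ Δ.comps :=
    ⟨himg, fun hsup => hUnotimg (hsup (hsub B0 hB0 hUB0))⟩
  have h1 : Δ'.comps.ncard ≤ part.ncard := by
    calc Δ'.comps.ncard ≤ ((fun B : Set (Set α) => Set.sUnion B) '' part).ncard := by
          apply Set.ncard_le_ncard _ (Set.toFinite _)
          rw [hcomps]
          rintro T ⟨⟨B, hB, rfl⟩, -⟩
          exact ⟨B, hB, rfl⟩
      _ ≤ part.ncard := Set.ncard_image_le (Set.toFinite _)
  have h2 : part.ncard = (g '' part).ncard := (Set.ncard_image_of_injOn hinj).symm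
  exact lt_of_le_of_lt (h1.trans h2.le) (Set.ncard_lt_ncard hss (Set.toFinite _))

lemma subst_preserves {Δ' Δ'' Δs : Distr α} {C : Set α} {L : Set (List α)}
    (hC : C ∈ Δ''.comps) (hA : SharedSyms Δ' ⊆ C)
    (hs : SubstResult Δ' Δ'' C Δs)
    (h1 : Decomposable L Δ') (h2 : Decomposable L Δ'') :
    Decomposable L Δs := by
  classical
  rw [decomposable_iff] at h1 h2 ⊢
  intro s hsproj
  obtain ⟨a0, ha0⟩ := Δ''.comps_nonempty C hC
  obtain ⟨U0, hU0, -⟩ := Δs.comps_cover a0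
  obtain ⟨l0, hl0, -⟩ := hsproj U0 hU0
  set F : Set (Set α) := {T : Set α |
      T.Nonempty ∧ (T ∈ Δ''.comps \ {C} ∨ ∃ S ∈ Δ'.comps, T = C ∩ S)} with hF
  have hsF : Δs.comps = MaximalMem F := hs
  have hstar : ∀ S ∈ Δ'.comps, ∃ l ∈ L, projA (C ∩ S) l = projA (C ∩ S) s := by
    intro S hS
    by_cases hne : (C ∩ S).Nonempty
    · have hmem : C ∩ S ∈ F := ⟨hne, Or.inr ⟨S, hS, rfl⟩⟩
      obtain ⟨U, hU, hCSU⟩ := exists_max_superset F (Set.toFinite _) hmem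
      obtain ⟨l, hl, he⟩ := hsproj U (hsF ▸ hU)
      refine ⟨l, hl, ?_⟩
      rw [← projA_of_subset hCSU l, he, projA_of_subset hCSU]
    · rw [Set.not_nonempty_iff_eq_empty] at hne
      rw [hne]
      exact ⟨l0, hl0, by rw [projA_eq_nil (by simp), projA_eq_nil (by simp)]⟩
  refine h2 s fun T hT => ?_
  by_cases hTC : T = C
  · subst hTC
    set t := projA T s with htdef
    have ht : ∀ a ∈ t, a ∈ T := fun a ha => (mem_projA.mp ha).2
    set cs : List (Set α) := (Set.toFinite Δ'.comps).toFinset.toList with hcs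
    have hcsmem : ∀ S : Set α, S ∈ cs ↔ S ∈ Δ'.comps := by
      intro S; rw [hcs, Finset.mem_toList, Set.Finite.mem_toFinset]
    set lfun : Set α → List α := fun S =>
      if h : ∃ l ∈ L, projA (T ∩ S) l = projA (T ∩ S) s then h.choose else l0
      with hlf
    have hlfun : ∀ S ∈ Δ'.comps, lfun S ∈ L ∧
        projA (T ∩ S) (lfun S) = projA (T ∩ S) s := by
      intro S hS
      have h := hstar S hS
      simp only [hlf, dif_pos h]
      exact h.choose_spec
    set pairs : List (Set α × List α) := cs.map fun S => (S, projA S (lfun S))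
      with hpr
    have hbp : ∀ p ∈ pairs, (∀ x ∈ p.2, x ∈ p.1) ∧ projA T p.2 = projA p.1 t := by
      rintro p hp
      rw [hpr, List.mem_map] at hp
      obtain ⟨S, hScs, rfl⟩ := hp
      have hS : S ∈ Δ'.comps := (hcsmem S).mp hScs
      refine ⟨fun x hx => (mem_projA.mp hx).2, ?_⟩
      have e1 : projA T (projA S (lfun S)) = projA (T ∩ S) (lfun S) :=
        projA_projA T S (lfun S)
      have e2 : projA S t = projA (S ∩ T) s := by
        rw [htdef, projA_projA]
      rw [e1, (hlfun S hS).2, e2, Set.inter_comm]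
    have hbd : pairs.Pairwise
        (fun p q : Set α × List α => ∀ x, x ∈ p.1 → x ∈ q.1 → x ∈ T) := by
      rw [hpr, List.pairwise_map]
      have hnd : cs.Pairwise (· ≠ ·) := (Finset.nodup_toList _)
      refine hnd.imp_of_mem ?_
      intro S S' hSm hS'm hne x hx hx'
      exact hA ⟨S, (hcsmem S).mp hSm, S', (hcsmem S').mp hS'm, hne, hx, hx'⟩
    obtain ⟨w, hw1, hw2, -⟩ := build_lemma T t ht pairs hbp hbd
    have hwL : w ∈ L := by
      refine h1 w fun S hS => ?_
      refine ⟨lfun S, (hlfun S hS).1, ?_⟩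
      have hpm : (S, projA S (lfun S)) ∈ pairs := by
        rw [hpr, List.mem_map]
        exact ⟨S, (hcsmem S).mpr hS, rfl⟩
      exact (hw2 _ hpm).symm
    exact ⟨w, hwL, hw1⟩
  · have hTmax : T ∈ MaximalMem F := by
      refine ⟨⟨Δ''.comps_nonempty T hT, Or.inl ⟨hT, hTC⟩⟩, ?_⟩
      rintro U ⟨hUne, hU | ⟨S, hS, rfl⟩⟩ hsub
      · by_contra hne'
        exact Δ''.comps_incomp T hT U hU.1 hne' hsub
      · exact absurd (hsub.trans Set.inter_subset_left)
          (Δ''.comps_incomp T hT C hC hTC)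
    exact hsproj T (hsF ▸ hTmax)

lemma closure_decomp {Q : Set (Distr α)} {L : Set (List α)}
    (hbase : ∀ q ∈ Q, Decomposable L q) {Δ₀ : Distr α}
    (h : SubstClosure Q Δ₀) : Decomposable L Δ₀ := by
  induction h with
  | base Δ' h => exact hbase Δ' h
  | step Δ' Δ'' Δs C h1 h2 hC hA hs ih1 ih2 =>
    exact subst_preserves hC hA hs ih1 ih2

end Stmt11Aux

/-- If `Δ` belongs to the substitution closure of some
`Q ⊆ M(Δ)`, then every `P ∈ S_Δ` with `|P| ≥ 2` and `P ≤_Δ Q` is a reduction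
of `Δ`. -/
theorem statement_11 {α : Type} [Fintype α] (Δ : Distr α) (Q : Set (Distr α))
    (hQ : ∀ q ∈ Q, MergedFrom q Δ)
    (hcl : SubstClosure Q Δ)
    (P : Set (Distr α)) (hP : MemS Δ P) (hcard : 2 ≤ P.ncard)
    (hPQ : SetLE P Q) :
    IsReduction P Δ := by
  refine ⟨hcard, fun Δ' hΔ' => Stmt11Aux.merged_ncard_lt (hP.1 Δ' hΔ'), fun L => ?_⟩
  constructor
  · intro hdec Δ' hΔ'
    exact Stmt11Aux.decomp_mono hdec (Stmt11Aux.merged_distLE (hP.1 Δ' hΔ'))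
  · intro hall
    have hbase : ∀ q ∈ Q, Decomposable L q := by
      intro q hq
      obtain ⟨Δ'', hΔ'', hle⟩ := hPQ q hq
      exact Stmt11Aux.decomp_mono (hall Δ'' hΔ'') hle
    exact Stmt11Aux.closure_decomp hbase hcl
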